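/- Let A be a unital C*-algebra and F a strictly norming set of representations of A, i.e., for every a ∈ A there is φ ∈ F with ‖φ(a)‖ = ‖a‖. Then for every a ∈ A: if φ(a) is bounded below uniformly, in the sense that each φ(a) is invertible with ‖φ(a)⁻¹‖ ≤ C for a fixed constant C and all φ ∈ F, and similarly for a*, then a is invertible in A with ‖a⁻¹‖ ≤ C. -/

import Mathlib

set_option maxHeartbeats 1000000

private lemma op_lower {H : Type} [NormedAddCommGroup H] [InnerProductSpace ℂ H]
    [CompleteSpace H] (S : H →L[ℂ] H) (C : ℝ) (hC : 0 < C)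
    (T : H →L[ℂ] H) (hT2 : T * S = 1) (hT3 : ‖T‖ ≤ C) :
    algebraMap ℝ (H →L[ℂ] H) ((C ^ 2)⁻¹) ≤ star S * S := by
  rw [ContinuousLinearMap.le_def]
  constructor
  · exact ((IsSelfAdjoint.star_mul_self S).sub
      (IsSelfAdjoint.algebraMap _ (IsSelfAdjoint.all ((C ^ 2)⁻¹ : ℝ)))).isSymmetric
  · intro ξ
    have hξ : ‖ξ‖ ≤ C * ‖S ξ‖ := by
      have h : T (S ξ) = ξ := by
        have := congrArg (fun f : H →L[ℂ] H => f ξ) hT2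
        simpa [ContinuousLinearMap.mul_apply] using this
      calc ‖ξ‖ = ‖T (S ξ)‖ := by rw [h]
        _ ≤ ‖T‖ * ‖S ξ‖ := T.le_opNorm _
        _ ≤ C * ‖S ξ‖ := by gcongr
    have key : (C ^ 2)⁻¹ * ‖ξ‖ ^ 2 ≤ ‖S ξ‖ ^ 2 := by
      rw [inv_mul_le_iff₀ (by positivity)]
      nlinarith [norm_nonneg ξ, norm_nonneg (S ξ)]
    have hre : RCLike.re (inner ℂ ((star S * S) ξ) ξ : ℂ) = ‖S ξ‖ ^ 2 := by
      rw [ContinuousLinearMap.mul_apply, ContinuousLinearMap.star_eq_adjoint,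
        ContinuousLinearMap.adjoint_inner_left]
      simp [inner_self_eq_norm_sq]
      rw [← Complex.ofReal_pow, Complex.ofReal_re]
    have halg : (algebraMap ℝ (H →L[ℂ] H) ((C ^ 2)⁻¹)) ξ = ((C ^ 2)⁻¹ : ℝ) • ξ := by
      rw [Algebra.algebraMap_eq_smul_one]; simp
    have heq : (star S * S - algebraMap ℝ (H →L[ℂ] H) ((C ^ 2)⁻¹)).reApplyInnerSelf ξ
        = ‖S ξ‖ ^ 2 - (C ^ 2)⁻¹ * ‖ξ‖ ^ 2 := by
      simp only [ContinuousLinearMap.reApplyInnerSelf, ContinuousLinearMap.sub_apply,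
        inner_sub_left, map_sub, halg, inner_smul_real_left, RCLike.smul_re, hre,
        inner_self_eq_norm_sq]
      rw [RCLike.real_smul_eq_coe_smul (K := ℂ), inner_smul_real_left,
        RCLike.smul_re, inner_self_eq_norm_sq]
    rw [heq]
    linarith

private lemma key_lemma (A : Type) [CStarAlgebra A] [PartialOrder A] [StarOrderedRing A]
    [Nontrivial A] {ι : Type} (H : ι → Type)
    [∀ i, NormedAddCommGroup (H i)] [∀ i, InnerProductSpace ℂ (H i)]
    [∀ i, CompleteSpace (H i)]
    (φ : ∀ i, A →⋆ₐ[ℂ] (H i →L[ℂ] H i))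
    (hnorm : ∀ a : A, ∃ i, ‖φ i a‖ = ‖a‖)
    (C : ℝ) (hC : 0 < C) (x : A)
    (hx : ∀ i, ∃ T : H i →L[ℂ] H i, φ i x * T = 1 ∧ T * φ i x = 1 ∧ ‖T‖ ≤ C) :
    algebraMap ℝ A ((C ^ 2)⁻¹) ≤ star x * x := by
  have hone : (0 : A) ≤ 1 := by simpa using star_mul_self_nonneg (1 : A)
  have hmono : ∀ s t : ℝ, s ≤ t → algebraMap ℝ A s ≤ algebraMap ℝ A t := by
    intro s t h
    rw [← sub_nonneg, ← map_sub, Algebra.algebraMap_eq_smul_one]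
    exact smul_nonneg (by linarith) hone
  have hmapalg : ∀ i (t : ℝ),
      φ i (algebraMap ℝ A t) = algebraMap ℝ (H i →L[ℂ] H i) t := by
    intro i t
    rw [IsScalarTower.algebraMap_apply ℝ ℂ A, AlgHomClass.commutes,
      ← IsScalarTower.algebraMap_apply]
  have hmap_nonneg : ∀ i (y : A), 0 ≤ y → 0 ≤ φ i y := by
    intro i y hy
    have h1 := CFC.sqrt_mul_sqrt_self y hy
    have h2 : IsSelfAdjoint (CFC.sqrt y) := IsSelfAdjoint.of_nonneg (CFC.sqrt_nonneg y)
    have h3 := star_mul_self_nonneg (φ i (CFC.sqrt y))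
    rwa [← map_star, h2.star_eq, ← map_mul, h1] at h3
  have hop : ∀ i, algebraMap ℝ (H i →L[ℂ] H i) ((C ^ 2)⁻¹) ≤ φ i (star x * x) := by
    intro i
    obtain ⟨T, h1, h2, h3⟩ := hx i
    have := op_lower (φ i x) C hC T h2 h3
    rwa [← map_star, ← map_mul] at this
  have hφle : ∀ i (y : A), ‖φ i y‖ ≤ ‖y‖ := fun i y =>
    NonUnitalStarAlgHom.norm_apply_le (φ i) y
  -- (C^2)⁻¹ ≤ ‖star x * x‖
  have hrN : (C ^ 2)⁻¹ ≤ ‖star x * x‖ := by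
    obtain ⟨j, hj⟩ := hnorm 1
    rw [map_one] at hj
    have hA1 : ‖(1 : A)‖ = 1 := norm_one
    have hj1 : (1 : H j →L[ℂ] H j) ≠ 0 := by
      intro h; rw [h, norm_zero, hA1] at hj; exact one_ne_zero hj.symm
    have : Nontrivial (H j) := by
      by_contra h
      rw [not_nontrivial_iff_subsingleton] at h
      exact hj1 (Subsingleton.elim _ _)
    obtain ⟨ξ, hξ⟩ := exists_ne (0 : H j)
    obtain ⟨T, h1, h2, h3⟩ := hx j
    have hb : ‖ξ‖ ≤ C * ‖φ j x ξ‖ := by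
      have h : T (φ j x ξ) = ξ := by
        have := congrArg (fun f : H j →L[ℂ] H j => f ξ) h2
        simpa [ContinuousLinearMap.mul_apply] using this
      calc ‖ξ‖ = ‖T (φ j x ξ)‖ := by rw [h]
        _ ≤ ‖T‖ * ‖φ j x ξ‖ := T.le_opNorm _
        _ ≤ C * ‖φ j x ξ‖ := by gcongr
    have hb2 : ‖φ j x ξ‖ ≤ ‖x‖ * ‖ξ‖ :=
      ((φ j x).le_opNorm ξ).trans (by gcongr; exact hφle j x)
    have hξ0 : 0 < ‖ξ‖ := norm_pos_iff.mpr hξ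
    have h1C : 1 ≤ C * ‖x‖ := by
      have := hb.trans (by nlinarith : C * ‖φ j x ξ‖ ≤ C * (‖x‖ * ‖ξ‖))
      nlinarith
    rw [CStarRing.norm_star_mul_self]
    rw [inv_le_iff_one_le_mul₀ (by positivity)]
    nlinarith [norm_nonneg x]
  set z := star x * x with hz
  have hzsa : IsSelfAdjoint z := IsSelfAdjoint.star_mul_self x
  set b := algebraMap ℝ A ‖z‖ - z with hb
  have hb_nn : (0 : A) ≤ b := sub_nonneg.mpr hzsa.le_algebraMap_norm_self
  have hb_i : ∀ i, ‖φ i b‖ ≤ ‖z‖ - (C ^ 2)⁻¹ := by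
    intro i
    have e1 : φ i b = algebraMap ℝ (H i →L[ℂ] H i) ‖z‖ - φ i z := by
      rw [hb, map_sub, hmapalg]
    have e2 : φ i b ≤ algebraMap ℝ (H i →L[ℂ] H i) (‖z‖ - (C ^ 2)⁻¹) := by
      rw [e1, map_sub]
      exact sub_le_sub_left (hop i) _
    exact (CStarAlgebra.norm_le_iff_le_algebraMap _ (by linarith)
      (hmap_nonneg i b hb_nn)).mpr e2
  obtain ⟨i, hi⟩ := hnorm b
  have hbnorm : ‖b‖ ≤ ‖z‖ - (C ^ 2)⁻¹ := hi ▸ hb_i i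
  have hble : b ≤ algebraMap ℝ A (‖z‖ - (C ^ 2)⁻¹) :=
    (IsSelfAdjoint.of_nonneg hb_nn).le_algebraMap_norm_self.trans (hmono _ _ hbnorm)
  have hzeq : z = algebraMap ℝ A ‖z‖ - b := by rw [hb, sub_sub_cancel]
  rw [hzeq]
  calc algebraMap ℝ A ((C ^ 2)⁻¹)
      = algebraMap ℝ A ‖z‖ - algebraMap ℝ A (‖z‖ - (C ^ 2)⁻¹) := by
        rw [← map_sub]; ring_nf
    _ ≤ algebraMap ℝ A ‖z‖ - b := sub_le_sub_left hble _

/-- Let `F` be a strictly norming set of representations of a unital C*-algebra `A`.  If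
for some `a ∈ A` each `φ a` and each `φ (star a)` is invertible with inverse of norm at
most `C`, then `a` is invertible in `A` with `‖a⁻¹‖ ≤ C`. -/
theorem isUnit_of_uniformly_invertible
    (A : Type) [CStarAlgebra A]
    {ι : Type} (H : ι → Type)
    [∀ i, NormedAddCommGroup (H i)] [∀ i, InnerProductSpace ℂ (H i)]
    [∀ i, CompleteSpace (H i)]
    (φ : ∀ i, A →⋆ₐ[ℂ] (H i →L[ℂ] H i))
    (hnorm : ∀ a : A, ∃ i, ‖φ i a‖ = ‖a‖)
    (C : ℝ) (hC : 0 < C) (a : A)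
    (ha : ∀ i, ∃ T : H i →L[ℂ] H i, φ i a * T = 1 ∧ T * φ i a = 1 ∧ ‖T‖ ≤ C)
    (hastar : ∀ i, ∃ T : H i →L[ℂ] H i,
      φ i (star a) * T = 1 ∧ T * φ i (star a) = 1 ∧ ‖T‖ ≤ C) :
    ∃ b : A, a * b = 1 ∧ b * a = 1 ∧ ‖b‖ ≤ C := by
  rcases subsingleton_or_nontrivial A with hsub | hnt
  · exact ⟨0, Subsingleton.elim _ _, Subsingleton.elim _ _, by simpa using hC.le⟩
  · letI := CStarAlgebra.spectralOrder A
    haveI := CStarAlgebra.spectralOrderedRing A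
    have h1 := key_lemma A H φ hnorm C hC a ha
    have h2 := key_lemma A H φ hnorm C hC (star a) hastar
    rw [star_star] at h2
    have hr0 : (0 : ℝ) < (C ^ 2)⁻¹ := by positivity
    have hone : (0 : A) ≤ 1 := by simpa using star_mul_self_nonneg (1 : A)
    have hralg_nn : 0 ≤ algebraMap ℝ A ((C ^ 2)⁻¹) := by
      rw [Algebra.algebraMap_eq_smul_one]
      exact smul_nonneg hr0.le hone
    have hru : IsUnit (algebraMap ℝ A ((C ^ 2)⁻¹)) :=
      (isUnit_iff_ne_zero.mpr hr0.ne').map (algebraMap ℝ A)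
    obtain ⟨zu, hzu⟩ := CStarAlgebra.isUnit_of_le _ h1 ⟨hralg_nn, hru⟩
    obtain ⟨wu, hwu⟩ := CStarAlgebra.isUnit_of_le _ h2 ⟨hralg_nn, hru⟩
    set b := (↑zu⁻¹ : A) * star a with hbdef
    have hba : b * a = 1 := by
      rw [hbdef, mul_assoc, ← hzu]
      exact zu.inv_mul
    have hab : a * (star a * (↑wu⁻¹ : A)) = 1 := by
      rw [← mul_assoc, ← hwu]
      exact wu.mul_inv
    have hbR : b = star a * (↑wu⁻¹ : A) := by
      calc b = b * (a * (star a * (↑wu⁻¹ : A))) := by rw [hab, mul_one]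
        _ = (b * a) * (star a * (↑wu⁻¹ : A)) := (mul_assoc b a _).symm
        _ = star a * (↑wu⁻¹ : A) := by rw [hba, one_mul]
    have hab' : a * b = 1 := by rw [hbR]; exact hab
    -- norm estimate
    have hsz : star (↑zu : A) = ↑zu := by
      rw [hzu]; exact (IsSelfAdjoint.star_mul_self a).star_eq
    have hzinv_star : star (↑zu⁻¹ : A) = ↑zu⁻¹ := by
      have e2 : (↑zu : A) * ↑zu⁻¹ = 1 := zu.mul_inv
      have e3 : star (↑zu⁻¹ : A) * (↑zu : A) = 1 := by
        rw [← hsz, ← star_mul, e2, star_one]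
      calc star (↑zu⁻¹ : A) = star (↑zu⁻¹ : A) * ((↑zu : A) * ↑zu⁻¹) := by
            rw [e2, mul_one]
        _ = (star (↑zu⁻¹ : A) * (↑zu : A)) * ↑zu⁻¹ := by rw [mul_assoc]
        _ = ↑zu⁻¹ := by rw [e3, one_mul]
    have hzinv_nn : (0 : A) ≤ ↑zu⁻¹ :=
      CFC.inv_nonneg_of_nonneg zu (hzu ▸ star_mul_self_nonneg a)
    have hrne : ((C : ℝ) ^ 2) ≠ 0 := by positivity
    let ru : Aˣ := ⟨algebraMap ℝ A ((C ^ 2)⁻¹), algebraMap ℝ A (C ^ 2),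
      by rw [← map_mul, inv_mul_cancel₀ hrne, map_one],
      by rw [← map_mul, mul_inv_cancel₀ hrne, map_one]⟩
    have hru_le : (↑ru : A) ≤ ↑zu := by
      rw [hzu]; exact h1
    have hinv_le : (↑zu⁻¹ : A) ≤ ↑ru⁻¹ := CStarAlgebra.inv_le_inv hralg_nn hru_le
    have hcoe : (↑ru⁻¹ : A) = algebraMap ℝ A (C ^ 2) := rfl
    have hninv : ‖(↑zu⁻¹ : A)‖ ≤ C ^ 2 := by
      rw [CStarAlgebra.norm_le_iff_le_algebraMap _ (by positivity) hzinv_nn]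
      rw [← hcoe]; exact hinv_le
    have hmul : b * star b = ↑zu⁻¹ := by
      rw [hbdef, star_mul, star_star, hzinv_star, mul_assoc,
        ← mul_assoc (star a) a, ← hzu, ← mul_assoc, zu.inv_mul, one_mul]
    have hbnorm : ‖b‖ * ‖b‖ ≤ C ^ 2 := by
      rw [← CStarRing.norm_self_mul_star, hmul]
      exact hninv
    exact ⟨b, hab', hba, by nlinarith [norm_nonneg b]⟩
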